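/- Let K = ℚ(√d), d ≡ 2, 3 (mod 4) squarefree, with p inert, and let C ⊆ 𝔽_{p²}^N ≅ (𝔽_p(ω))^N (ω² = d in 𝔽_p) be a self-dual linear code. For a codeword c = s + tω with s, t ∈ {−(p−1)/2, …, (p−1)/2}^N, write ĉ = s + t√d ∈ O_K^N. Then the minimum of the lattice (ρ^{-1}(C), b_{1/(2p)}) equals min{ p, min over nonzero c ∈ C of b_{1/(2p)}(ĉ, ĉ) }, where b_{1/(2p)}(x,y) = (1/(2p)) Σᵢ Tr_{K/ℚ}(xᵢyᵢ). -/

import Mathlib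

set_option synthInstance.maxHeartbeats 1000000
set_option maxHeartbeats 1000000

open NumberField

/-- The dual code of a linear code `C ⊆ R^ι` with respect to the standard dot product. -/
def dualCode {R : Type*} [CommRing R] {ι : Type*} [Fintype ι]
    (C : Submodule R (ι → R)) : Submodule R (ι → R) where
  carrier := {x | ∀ y ∈ C, ∑ i, x i * y i = 0}
  zero_mem' := by intro y hy; simp
  add_mem' := by
    intro a b ha hb y hy
    simp only [Pi.add_apply, add_mul, Finset.sum_add_distrib, ha y hy, hb y hy, add_zero]
  smul_mem' := by
    intro c a ha y hy
    simp only [Pi.smul_apply, smul_eq_mul, mul_assoc, ← Finset.mul_sum, ha y hy, mul_zero]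


lemma aux_not_sq (d : ℤ) (hd : Squarefree d) (hd1 : 1 < d) (q : ℚ) : q ^ 2 ≠ (d : ℚ) := by
  intro h
  have hden : q.den * q.den = 1 := by
    have : (q * q).den = q.den * q.den := Rat.mul_self_den q
    rw [← sq, h] at this
    simpa using this.symm
  have hden1 : q.den = 1 := by nlinarith [q.pos]
  have hq : (q.num : ℚ) = q := by
    conv_rhs => rw [← Rat.num_div_den q]
    rw [hden1]; simp
  have hnum : q.num ^ 2 = d := by
    have : (q.num : ℚ) ^ 2 = (d : ℚ) := by rw [hq]; exact h
    exact_mod_cast this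
  have := hd q.num ⟨1, by rw [mul_one, ← pow_two]; omega⟩
  have h1 := Int.isUnit_iff.mp this
  rcases h1 with h1 | h1 <;> rw [h1] at hnum <;> omega

lemma aux_den (d : ℤ) (hd : Squarefree d) {q : ℚ} {c : ℤ} (h : (d : ℚ) * q ^ 2 = (c : ℚ)) :
    ∃ n : ℤ, (q : ℚ) = (n : ℚ) := by
  have hk : ((q.den : ℤ) : ℚ) ≠ 0 := by exact_mod_cast q.den_ne_zero
  have hq : (q.num : ℚ) = q * (q.den : ℚ) := by
    field_simp [eq_div_iff hk] at *
    rw [Rat.mul_den_eq_num]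
  have key : d * q.num ^ 2 = c * (q.den : ℤ) ^ 2 := by
    have : (d : ℚ) * (q.num : ℚ) ^ 2 = (c : ℚ) * ((q.den : ℤ) : ℚ) ^ 2 := by
      rw [hq, show (d:ℚ) * (q * (q.den:ℚ))^2 = ((d:ℚ)*q^2) * (q.den:ℚ)^2 by ring, h]
      push_cast; ring
    exact_mod_cast this
  have hcop : IsCoprime (q.den : ℤ) q.num := by
    rw [Int.isCoprime_iff_gcd_eq_one, Int.gcd_comm]
    exact_mod_cast q.reduced
  have hdvd : ((q.den : ℤ))^2 ∣ d * q.num ^ 2 := ⟨c, by linarith [key]⟩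
  have hdvd2 : ((q.den : ℤ))^2 ∣ d := (IsCoprime.pow hcop (n := 2) (m := 2)).dvd_of_dvd_mul_right hdvd
  have := hd (q.den : ℤ) (by rwa [← sq])
  have hden1 : q.den = 1 := by
    have := Int.isUnit_iff.mp this
    omega
  refine ⟨q.num, ?_⟩
  conv_lhs => rw [← Rat.num_div_den q]
  rw [hden1]; simp


lemma aux_mod (p : ℕ) (hodd : p % 2 = 1) (hp1 : 1 < p) (a : ℤ) :
    ∃ s : ℤ, 2 * |s| ≤ (p : ℤ) - 1 ∧ (p : ℤ) ∣ (a - s) ∧ s ^ 2 ≤ a ^ 2 := by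
  set h : ℤ := ((p : ℤ) - 1) / 2 with hh
  have hp2 : (p : ℤ) = 2 * h + 1 := by omega
  have hppos : (0 : ℤ) < p := by omega
  have h0 : 0 ≤ (a + h) % p := Int.emod_nonneg _ (by omega)
  have h1 : (a + h) % p < p := Int.emod_lt_of_pos _ hppos
  have key : (p : ℤ) * ((a + h) / p) + (a + h) % p = a + h := Int.mul_ediv_add_emod _ _
  set s : ℤ := (a + h) % p - h with hs
  set q : ℤ := (a + h) / p with hq
  have hbound : -h ≤ s ∧ s ≤ h := by constructor <;> omega
  have ha : a = s + (p : ℤ) * q := by omega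
  refine ⟨s, ?_, ⟨q, by omega⟩, ?_⟩
  · rcases abs_cases s with ⟨he, _⟩ | ⟨he, _⟩ <;> omega
  · rcases lt_trichotomy q 0 with hq0 | hq0 | hq0
    · have hple : (p : ℤ) * q ≤ -p := by nlinarith
      have : a ≤ -h - 1 := by omega
      nlinarith [mul_nonneg (show (0:ℤ) ≤ s - a by omega) (show (0:ℤ) ≤ -a - s by omega)]
    · rw [hq0, mul_zero, add_zero] at ha; rw [ha]
    · have hple : (p : ℤ) ≤ (p : ℤ) * q := by nlinarith
      have : h + 1 ≤ a := by omega
      nlinarith [mul_nonneg (show (0:ℤ) ≤ a - s by omega) (show (0:ℤ) ≤ a + s by omega)]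



section QuadAux
variable {K : Type*} [Field K] [NumberField K]

lemma aux_li (d : ℤ) (hd : Squarefree d) (hd1 : 1 < d)
    (ω : K) (hω : ω ^ 2 = (d : K)) : LinearIndependent ℚ ![(1 : K), ω] := by
  rw [LinearIndependent.pair_iff]
  intro s t hst
  by_cases ht : t = 0
  · refine ⟨?_, ht⟩
    rw [ht, zero_smul, add_zero, smul_eq_zero] at hst
    simpa using hst
  · exfalso
    have hωeq : ω = algebraMap ℚ K (-s / t) := by
      have h1 : t • ω = (-s) • (1 : K) := by
        rw [neg_smul]
        exact eq_neg_of_add_eq_zero_right hst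
      have : ω = (t⁻¹ * (-s)) • (1 : K) := by
        rw [mul_smul, ← h1, ← mul_smul, inv_mul_cancel₀ ht, one_smul]
      rw [this, Algebra.algebraMap_eq_smul_one]
      ring_nf
    apply aux_not_sq d hd hd1 (-s / t)
    have h2 : (algebraMap ℚ K) ((-s / t) ^ 2) = algebraMap ℚ K ((d : ℚ)) := by
      rw [map_pow, ← hωeq, hω, map_intCast]
    exact (algebraMap ℚ K).injective h2

lemma aux_trace (hrank : Module.finrank ℚ K = 2) (d : ℤ) (hd : Squarefree d) (hd1 : 1 < d)
    (ω : K) (hω : ω ^ 2 = (d : K)) (a b : ℚ) :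
    Algebra.trace ℚ K (algebraMap ℚ K a + b • ω) = 2 * a := by
  have li := aux_li d hd hd1 ω hω
  set B := basisOfLinearIndependentOfCardEqFinrank li (by simp [hrank]) with hBdef
  have hB : ⇑B = ![(1 : K), ω] := coe_basisOfLinearIndependentOfCardEqFinrank _ _
  have hB0 : B 0 = 1 := by rw [hB]; rfl
  have hB1 : B 1 = ω := by rw [hB]; rfl
  have hTω : Algebra.trace ℚ K ω = 0 := by
    rw [Algebra.trace_eq_matrix_trace B, Matrix.trace, Fin.sum_univ_two]
    have e1 : ((Algebra.leftMulMatrix B) ω).diag 0 = 0 := by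
      rw [Matrix.diag_apply, Algebra.leftMulMatrix_eq_repr_mul, hB0, mul_one, ← hB1,
        B.repr_self]
      simp
    have e2 : ((Algebra.leftMulMatrix B) ω).diag 1 = 0 := by
      rw [Matrix.diag_apply, Algebra.leftMulMatrix_eq_repr_mul, hB1, ← pow_two, hω,
        show (d : K) = (d : ℚ) • B 0 by
          rw [hB0, ← Algebra.algebraMap_eq_smul_one, map_intCast],
        map_smul, B.repr_self]
      simp
    rw [e1, e2, add_zero]
  rw [map_add, map_smul, hTω, smul_zero, add_zero, Algebra.trace_algebraMap, hrank]
  norm_num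

lemma aux_coords (hrank : Module.finrank ℚ K = 2) (d : ℤ) (hd : Squarefree d) (hd1 : 1 < d)
    (ω : K) (hω : ω ^ 2 = (d : K)) (z : K) :
    ∃ a b : ℚ, z = algebraMap ℚ K a + b • ω := by
  have li := aux_li d hd hd1 ω hω
  set B := basisOfLinearIndependentOfCardEqFinrank li (by simp [hrank]) with hBdef
  have hB : ⇑B = ![(1 : K), ω] := coe_basisOfLinearIndependentOfCardEqFinrank _ _
  have hB0 : B 0 = 1 := by rw [hB]; rfl
  have hB1 : B 1 = ω := by rw [hB]; rfl
  refine ⟨B.repr z 0, B.repr z 1, ?_⟩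
  have := B.sum_repr z
  rw [Fin.sum_univ_two, hB0, hB1] at this
  conv_lhs => rw [← this]
  rw [Algebra.algebraMap_eq_smul_one]

lemma aux_unique (d : ℤ) (hd : Squarefree d) (hd1 : 1 < d)
    (ω : K) (hω : ω ^ 2 = (d : K)) (a b : ℚ)
    (h : algebraMap ℚ K a + b • ω = 0) : a = 0 ∧ b = 0 := by
  have li := aux_li d hd hd1 ω hω
  rw [LinearIndependent.pair_iff] at li
  exact li a b (by rw [← h, Algebra.algebraMap_eq_smul_one])

lemma aux_int (hrank : Module.finrank ℚ K = 2) (d : ℤ) (hd : Squarefree d) (hd1 : 1 < d)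
    (hdmod : d % 4 = 2 ∨ d % 4 = 3)
    (ω : K) (hω : ω ^ 2 = (d : K)) (y : K) (hy : IsIntegral ℤ y) :
    ∃ a b : ℤ, y = algebraMap ℚ K (a : ℚ) + ((b : ℤ) : ℚ) • ω := by
  obtain ⟨q₀, q₁, hz⟩ := aux_coords hrank d hd hd1 ω hω y
  -- trace is an integer
  have hT : IsIntegral ℤ (Algebra.trace ℚ K y) := Algebra.isIntegral_trace hy
  obtain ⟨A, hA⟩ := IsIntegrallyClosed.isIntegral_iff.mp hT
  have hA' : (A : ℚ) = 2 * q₀ := by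
    have : algebraMap ℤ ℚ A = (A : ℚ) := by simp
    rw [this] at hA
    rw [hA, hz, aux_trace hrank d hd hd1 ω hω]
  -- the element y² - A·y is a rational algebraic integer
  have hω' : ω ^ 2 = algebraMap ℚ K ((d : ℚ)) := by rw [map_intCast]; exact hω
  have hz2 : y ^ 2 - (A : ℚ) • y = algebraMap ℚ K ((d : ℚ) * q₁ ^ 2 - q₀ ^ 2) := by
    rw [hz, Algebra.smul_def, Algebra.smul_def, hA']
    simp only [map_sub, map_mul, map_pow, map_ofNat]
    linear_combination (algebraMap ℚ K q₁) ^ 2 * hω'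
  have hzint : IsIntegral ℤ (y ^ 2 - (A : ℚ) • y) := by
    have h1 : (A : ℚ) • y = (A : ℤ) • y := (Int.cast_smul_eq_zsmul ℚ A y).symm ▸ rfl
    rw [show (A:ℚ) • y = A • y from Int.cast_smul_eq_zsmul ℚ A y]
    exact (hy.pow 2).sub (hy.smul A)
  have hmint : IsIntegral ℤ ((d : ℚ) * q₁ ^ 2 - q₀ ^ 2) := by
    rw [← isIntegral_algebraMap_iff (algebraMap ℚ K).injective, ← hz2]
    exact hzint
  obtain ⟨m, hm⟩ := IsIntegrallyClosed.isIntegral_iff.mp hmint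
  have hm' : (m : ℚ) = (d : ℚ) * q₁ ^ 2 - q₀ ^ 2 := by
    rw [← hm]; simp
  -- 2q₁ is an integer
  obtain ⟨B, hB⟩ := aux_den d hd (q := 2 * q₁) (c := 4 * m + A ^ 2)
    (by push_cast; linear_combination (-4) * hm' - ((A:ℚ) + 2*q₀) * hA')
  -- integer relation: 4m = d B² - A²
  have hrel : 4 * m = d * B ^ 2 - A ^ 2 := by
    have : ((4 * m : ℤ) : ℚ) = ((d * B ^ 2 - A ^ 2 : ℤ) : ℚ) := by
      push_cast
      rw [← hB]
      linear_combination 4 * hm' + ((A:ℚ) + 2*q₀) * hA'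
    exact_mod_cast this
  -- parity analysis: A and B are both even
  have hpar : ∃ j k : ℤ, A = 2 * j ∧ B = 2 * k := by
    rcases Int.even_or_odd A with ⟨j, hj⟩ | ⟨j, hj⟩ <;>
      rcases Int.even_or_odd B with ⟨k, hk⟩ | ⟨k, hk⟩
    · exact ⟨j, k, by omega, by omega⟩
    · -- A even, B odd : d ≡ 0 mod 4, contradiction
      exfalso
      have : d = 4 * (m + j * j - d * (k * k + k)) := by
        rw [hj, hk] at hrel; ring_nf; ring_nf at hrel; linarith
      obtain ⟨w, hw⟩ : ∃ w, d = 4 * w := ⟨_, this⟩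
      omega
    · -- A odd, B even : 1 ≡ 0 mod 4, contradiction
      exfalso
      have : (1 : ℤ) = 4 * (d * (k * k) - m - j * j - j) := by
        rw [hj, hk] at hrel; ring_nf; ring_nf at hrel; linarith
      omega
    · -- A odd, B odd : d ≡ 1 mod 4, contradiction
      exfalso
      have : d = 4 * (m + j * j + j - d * (k * k + k)) + 1 := by
        rw [hj, hk] at hrel; ring_nf; ring_nf at hrel; linarith
      obtain ⟨w, hw⟩ : ∃ w, d = 4 * w + 1 := ⟨_, this⟩
      omega
  obtain ⟨j, k, hj, hk⟩ := hpar
  refine ⟨j, k, ?_⟩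
  have hq0 : q₀ = (j : ℚ) := by
    rw [hj] at hA'; push_cast at hA'; linarith
  have hq1 : q₁ = (k : ℚ) := by
    rw [hk] at hB; push_cast at hB; linarith
  rw [hz, hq0, hq1]


end QuadAux

/-- Let `K = ℚ(√d)`, `d ≡ 2, 3 (mod 4)` squarefree, `p` inert (so
`𝒪_K = ℤ[√d]` and `𝒪_K/p𝒪_K ≅ 𝔽_{p²} = 𝔽_p(ω)`, `ω = ρ(√d)`), and let
`C ⊆ (𝒪_K/p𝒪_K)^N` be a self-dual linear code.  For a codeword `c = ρ(s + t√d)` with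
centered representatives `s, t ∈ {-(p-1)/2, …, (p-1)/2}^N` write `ĉ = s + t√d ∈ 𝒪_K^N`.
If `μ` is the least value of `b_{1/(2p)}(ĉ, ĉ)` over nonzero codewords `c ∈ C` (with
centered lifts `ĉ`), then the minimum of the lattice `(ρ⁻¹(C), b_{1/(2p)})`,
i.e. the least value of `b_{1/(2p)}(x, x)` over nonzero `x ∈ ρ⁻¹(C)`, equals `min {p, μ}`,
where `b_{1/(2p)}(x, x) = (1/(2p)) ∑ᵢ Tr_{K/ℚ}(xᵢ²)`. -/
theorem statement17 (d : ℤ) (hd : Squarefree d) (hd1 : 1 < d)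
    (hdmod : d % 4 = 2 ∨ d % 4 = 3)
    (K : Type*) [Field K] [NumberField K] (hrank : Module.finrank ℚ K = 2)
    (sqrtd : 𝓞 K) (hsqrtd : (sqrtd : K) ^ 2 = (d : K))
    (p : ℕ) (hp : p.Prime) (hinert : (Ideal.span {(p : 𝓞 K)}).IsPrime)
    (N : ℕ) (C : Submodule (𝓞 K ⧸ Ideal.span {(p : 𝓞 K)})
      (Fin N → 𝓞 K ⧸ Ideal.span {(p : 𝓞 K)}))
    (hC : C = dualCode C)
    (b : (Fin N → 𝓞 K) → ℚ)
    (hb : ∀ x, b x = (1 / (2 * (p : ℚ))) * ∑ i, Algebra.trace ℚ K ((x i : K) * (x i : K)))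
    (μ : ℚ)
    (hμ : IsLeast {q : ℚ | ∃ s t : Fin N → ℤ,
        (∀ i, 2 * |s i| ≤ (p : ℤ) - 1 ∧ 2 * |t i| ≤ (p : ℤ) - 1) ∧
        (fun i => Ideal.Quotient.mk (Ideal.span {(p : 𝓞 K)})
          ((s i : 𝓞 K) + (t i : 𝓞 K) * sqrtd)) ∈ C ∧
        (fun i => Ideal.Quotient.mk (Ideal.span {(p : 𝓞 K)})
          ((s i : 𝓞 K) + (t i : 𝓞 K) * sqrtd)) ≠ 0 ∧
        q = b (fun i => (s i : 𝓞 K) + (t i : 𝓞 K) * sqrtd)} μ) :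
    IsLeast {q : ℚ | ∃ x : Fin N → 𝓞 K, x ≠ 0 ∧
        (fun i => Ideal.Quotient.mk (Ideal.span {(p : 𝓞 K)}) (x i)) ∈ C ∧ q = b x}
      (min (p : ℚ) μ) := by
  have hd0 : (0:ℤ) < d := by omega
  set ω : K := (sqrtd : K) with hωdef
  have hω : ω ^ 2 = (d : K) := hsqrtd
  have hω' : ω ^ 2 = algebraMap ℚ K ((d : ℚ)) := by rw [map_intCast]; exact hω
  obtain ⟨hμmem, hμlb⟩ := hμ
  obtain ⟨s₀, t₀, hbnd₀, hmem₀, hne₀, hq₀⟩ := hμmem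
  -- p must be odd
  have hodd : p % 2 = 1 := by
    rcases hp.eq_two_or_odd with h2 | h
    · exfalso
      apply hne₀
      funext i
      have hs := (hbnd₀ i).1
      have ht := (hbnd₀ i).2
      have hs0 : s₀ i = 0 := by
        have h1 := abs_nonneg (s₀ i)
        have h2' : |s₀ i| = 0 := by rw [h2] at hs; push_cast at hs; omega
        exact abs_eq_zero.mp h2'
      have ht0 : t₀ i = 0 := by
        have h1 := abs_nonneg (t₀ i)
        have h2' : |t₀ i| = 0 := by rw [h2] at ht; push_cast at ht; omega
        exact abs_eq_zero.mp h2'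
      simp [hs0, ht0]
    · exact h
  have hp1 : 1 < p := hp.one_lt
  have hppos : (0:ℚ) < p := by exact_mod_cast hp.pos
  -- cast helper
  have castK : ∀ u v : ℤ, (((u : 𝓞 K) + (v : 𝓞 K) * sqrtd : 𝓞 K) : K)
      = algebraMap ℚ K ((u : ℚ)) + ((v : ℚ)) • ω := by
    intro u v
    rw [RingOfIntegers.coe_eq_algebraMap, map_add, map_mul, map_intCast, map_intCast,
      Algebra.smul_def, map_intCast, hωdef, RingOfIntegers.coe_eq_algebraMap]
    rw [map_intCast]
  -- trace of a square
  have traceQ : ∀ a c : ℚ, Algebra.trace ℚ K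
      ((algebraMap ℚ K a + c • ω) * (algebraMap ℚ K a + c • ω)) = 2 * (a^2 + (d:ℚ)*c^2) := by
    intro a c
    have hsq : (algebraMap ℚ K a + c • ω) * (algebraMap ℚ K a + c • ω)
        = algebraMap ℚ K (a^2 + (d:ℚ)*c^2) + (2*(a*c)) • ω := by
      rw [Algebra.smul_def, Algebra.smul_def]
      simp only [map_add, map_mul, map_pow, map_ofNat]
      linear_combination (algebraMap ℚ K c)^2 * hω'
    rw [hsq, aux_trace hrank d hd hd1 ω hω]
  have traceZ : ∀ u v : ℤ, Algebra.trace ℚ K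
      ((((u : 𝓞 K) + (v : 𝓞 K) * sqrtd : 𝓞 K) : K) * (((u : 𝓞 K) + (v : 𝓞 K) * sqrtd : 𝓞 K) : K))
      = 2*((u:ℚ)^2 + (d:ℚ)*(v:ℚ)^2) := fun u v => by rw [castK, traceQ]
  -- the value of b on integer-coordinate vectors
  have bval : ∀ u v : Fin N → ℤ,
      b (fun i => (u i : 𝓞 K) + (v i : 𝓞 K) * sqrtd)
        = ((∑ i, ((u i)^2 + d * (v i)^2) : ℤ) : ℚ) / p := by
    intro u v
    rw [hb]
    rw [Finset.sum_congr rfl fun i _ => traceZ (u i) (v i)]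
    rw [← Finset.mul_sum]
    push_cast
    field_simp
  -- quotient helpers
  have hmkdvd : ∀ z : 𝓞 K, (p : 𝓞 K) ∣ z →
      Ideal.Quotient.mk (Ideal.span {(p : 𝓞 K)}) z = 0 := fun z hz =>
    Ideal.Quotient.eq_zero_iff_mem.mpr (Ideal.mem_span_singleton.mpr hz)
  have hmkeq : ∀ z w : 𝓞 K, (p : 𝓞 K) ∣ z - w →
      Ideal.Quotient.mk (Ideal.span {(p : 𝓞 K)}) z
        = Ideal.Quotient.mk (Ideal.span {(p : 𝓞 K)}) w := fun z w hz =>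
    Ideal.Quotient.eq.mpr (Ideal.mem_span_singleton.mpr hz)
  constructor
  · -- membership
    rcases le_total (p : ℚ) μ with hpm | hpm
    · rw [min_eq_left hpm]
      obtain ⟨i₀, hi₀⟩ := Function.ne_iff.mp hne₀
      set u : Fin N → ℤ := fun i => if i = i₀ then (p:ℤ) else 0 with hu
      refine ⟨fun i => (u i : 𝓞 K) + ((0:ℤ) : 𝓞 K) * sqrtd, ?_, ?_, ?_⟩
      · intro h0
        have := congrFun h0 i₀
        simp [hu] at this
        exact (Nat.cast_ne_zero.mpr hp.ne_zero : (p : 𝓞 K) ≠ 0) (by exact_mod_cast this)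
      · have : (fun i => Ideal.Quotient.mk (Ideal.span {(p : 𝓞 K)})
            ((u i : 𝓞 K) + ((0:ℤ) : 𝓞 K) * sqrtd)) = 0 := by
          funext i
          apply hmkdvd
          by_cases hii : i = i₀ <;> simp [hu, hii]
        rw [this]
        exact C.zero_mem
      · rw [bval]
        have hsum : (∑ i, ((u i)^2 + d * ((fun _ => (0:ℤ)) i)^2) : ℤ) = (p:ℤ)^2 := by
          simp [hu, apply_ite (fun z : ℤ => z^2)]
        rw [hsum]
        push_cast
        field_simp
    · rw [min_eq_right hpm]
      refine ⟨fun i => (s₀ i : 𝓞 K) + (t₀ i : 𝓞 K) * sqrtd, ?_, hmem₀, hq₀⟩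
      intro h0
      apply hne₀
      funext i
      rw [show ((s₀ i : 𝓞 K) + (t₀ i : 𝓞 K) * sqrtd) = 0 from congrFun h0 i]
      simp
  · -- lower bound
    rintro q ⟨x, hx0, hxC, hqx⟩
    by_cases hc : (fun i => Ideal.Quotient.mk (Ideal.span {(p : 𝓞 K)}) (x i)) = 0
    · -- all coordinates divisible by p : q ≥ p
      have hdvd : ∀ i, ∃ c : 𝓞 K, x i = (p : 𝓞 K) * c := fun i =>
        Ideal.mem_span_singleton.mp (Ideal.Quotient.eq_zero_iff_mem.mp (congrFun hc i))
      choose y hy using hdvd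
      choose e f hef using fun i =>
        aux_int hrank d hd hd1 hdmod ω hω ((y i : K)) (y i).isIntegral_coe
      have hxcoord : ∀ i, x i = ((p * e i : ℤ) : 𝓞 K) + ((p * f i : ℤ) : 𝓞 K) * sqrtd := by
        intro i
        apply RingOfIntegers.coe_injective
        rw [hy i, map_mul, map_natCast]
        rw [show (algebraMap (𝓞 K) K) (y i) = algebraMap ℚ K ((e i : ℚ)) + ((f i : ℚ)) • ω from
          hef i]
        rw [show (algebraMap (𝓞 K) K) (((p * e i : ℤ) : 𝓞 K) + ((p * f i : ℤ) : 𝓞 K) * sqrtd)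
            = algebraMap ℚ K ((p * e i : ℤ) : ℚ) + (((p * f i : ℤ) : ℚ)) • ω from castK _ _]
        rw [Algebra.smul_def, Algebra.smul_def, map_intCast, map_intCast, map_intCast,
          map_intCast]
        push_cast
        ring
      obtain ⟨i₀, hi₀⟩ := Function.ne_iff.mp hx0
      have hef0 : e i₀ ≠ 0 ∨ f i₀ ≠ 0 := by
        by_contra hcon
        push_neg at hcon
        apply hi₀
        rw [hxcoord i₀, hcon.1, hcon.2]
        simp
      have hterm : ∀ i, (0:ℤ) ≤ (p * e i)^2 + d * (p * f i)^2 := fun i =>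
        add_nonneg (sq_nonneg _) (mul_nonneg hd0.le (sq_nonneg _))
      have hi₀sq : (p:ℤ)^2 ≤ (p * e i₀)^2 + d * (p * f i₀)^2 := by
        rcases hef0 with he | hf
        · have h1 : 1 ≤ (e i₀)^2 := by rcases lt_or_gt_of_ne he with h|h <;> nlinarith
          nlinarith [mul_nonneg hd0.le (sq_nonneg ((p:ℤ) * f i₀)), sq_nonneg (p:ℤ)]
        · have h1 : 1 ≤ (f i₀)^2 := by rcases lt_or_gt_of_ne hf with h|h <;> nlinarith
          nlinarith [sq_nonneg ((p:ℤ) * e i₀), sq_nonneg (p:ℤ)]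
      have hsum : (p:ℤ)^2 ≤ ∑ i, ((p * e i)^2 + d * (p * f i)^2) :=
        le_trans hi₀sq (Finset.single_le_sum (fun i _ => hterm i) (Finset.mem_univ i₀))
      have hbx : b x = ((∑ i, ((p * e i)^2 + d * (p * f i)^2) : ℤ) : ℚ) / p := by
        rw [show x = fun i => ((p * e i : ℤ) : 𝓞 K) + ((p * f i : ℤ) : 𝓞 K) * sqrtd from
          funext hxcoord, bval]
      have : (p:ℚ) ≤ b x := by
        rw [hbx, le_div_iff₀ hppos]
        have : ((p:ℚ))^2 ≤ ((∑ i, ((p * e i)^2 + d * (p * f i)^2) : ℤ) : ℚ) := by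
          exact_mod_cast hsum
        nlinarith
      calc min (p:ℚ) μ ≤ (p:ℚ) := min_le_left _ _
        _ ≤ b x := this
        _ = q := hqx.symm
    · -- nonzero codeword : q ≥ μ
      choose a a' ha using fun i =>
        aux_int hrank d hd hd1 hdmod ω hω ((x i : K)) (x i).isIntegral_coe
      have hxcoord : ∀ i, x i = ((a i : ℤ) : 𝓞 K) + ((a' i : ℤ) : 𝓞 K) * sqrtd := by
        intro i
        apply RingOfIntegers.coe_injective
        simp only [← RingOfIntegers.coe_eq_algebraMap]
        rw [ha i, castK]
      choose s hs1 hs2 hs3 using fun i => aux_mod p hodd hp1 (a i)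
      choose t ht1 ht2 ht3 using fun i => aux_mod p hodd hp1 (a' i)
      have hmk : ∀ i, Ideal.Quotient.mk (Ideal.span {(p : 𝓞 K)})
          ((s i : 𝓞 K) + (t i : 𝓞 K) * sqrtd)
          = Ideal.Quotient.mk (Ideal.span {(p : 𝓞 K)}) (x i) := by
        intro i
        apply hmkeq
        obtain ⟨k1, hk1⟩ := hs2 i
        obtain ⟨k2, hk2⟩ := ht2 i
        refine ⟨-((k1 : 𝓞 K) + (k2 : 𝓞 K) * sqrtd), ?_⟩
        rw [hxcoord i]
        have e1 : (a i : 𝓞 K) - (s i : 𝓞 K) = ((p:ℕ) : 𝓞 K) * (k1 : 𝓞 K) := by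
          have : ((a i - s i : ℤ) : 𝓞 K) = (((p:ℤ) * k1 : ℤ) : 𝓞 K) := by rw [hk1]
          push_cast at this
          push_cast
          linear_combination this
        have e2 : (a' i : 𝓞 K) - (t i : 𝓞 K) = ((p:ℕ) : 𝓞 K) * (k2 : 𝓞 K) := by
          have : ((a' i - t i : ℤ) : 𝓞 K) = (((p:ℤ) * k2 : ℤ) : 𝓞 K) := by rw [hk2]
          push_cast at this
          push_cast
          linear_combination this
        linear_combination -e1 - sqrtd * e2
      have hfun : (fun i => Ideal.Quotient.mk (Ideal.span {(p : 𝓞 K)})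
          ((s i : 𝓞 K) + (t i : 𝓞 K) * sqrtd))
          = (fun i => Ideal.Quotient.mk (Ideal.span {(p : 𝓞 K)}) (x i)) := funext hmk
      have hμle : μ ≤ b (fun i => (s i : 𝓞 K) + (t i : 𝓞 K) * sqrtd) := by
        apply hμlb
        exact ⟨s, t, fun i => ⟨hs1 i, ht1 i⟩, by rw [hfun]; exact hxC, by rw [hfun]; exact hc, rfl⟩
      have hble : b (fun i => (s i : 𝓞 K) + (t i : 𝓞 K) * sqrtd) ≤ b x := by
        rw [bval, show x = fun i => ((a i : ℤ) : 𝓞 K) + ((a' i : ℤ) : 𝓞 K) * sqrtd from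
          funext hxcoord, bval]
        have hZ : (∑ i, ((s i)^2 + d * (t i)^2) : ℤ) ≤ (∑ i, ((a i)^2 + d * (a' i)^2) : ℤ) := by
          apply Finset.sum_le_sum
          intro i _
          have h1 := hs3 i
          have h2 := ht3 i
          nlinarith [hd0]
        have : ((∑ i, ((s i)^2 + d * (t i)^2) : ℤ) : ℚ)
            ≤ ((∑ i, ((a i)^2 + d * (a' i)^2) : ℤ) : ℚ) := by exact_mod_cast hZ
        exact (div_le_div_iff_of_pos_right hppos).mpr this
      calc min (p:ℚ) μ ≤ μ := min_le_right _ _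
        _ ≤ _ := hμle
        _ ≤ b x := hble
        _ = q := hqx.symm
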